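/- Let (T,*,[[·,·,·]]) be a left Bol algebra over ℝ and ν: T × T → T* a bilinear map. Define on T ⊕ T* the binary operation (x+f) *_ν (y+g) := x*y + ν(x,y) + f∘l(y) - g∘l(x), where (f∘l(y))(z) = f(y*z), and define b̃(x+f,y+g) := f(y) + g(x). Then b̃ satisfies the associativity condition b̃((x+f)*_ν(y+g), z+h) = b̃(x+f, (y+g)*_ν(z+h)) for all x,y,z ∈ T, f,g,h ∈ T* if and only if ν(x,y)(z) = ν(y,z)(x) for all x,y,z ∈ T. -/
import Mathlib


/-- A left Bol algebra over ℝ: a real vector space with a bilinear operation `mul`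
and a trilinear operation `tri` satisfying (T01), (T02), (T1), (T2) and (T3). -/
structure LeftBolAlgebra (T : Type*) [AddCommGroup T] [Module ℝ T] where
  mul : T →ₗ[ℝ] T →ₗ[ℝ] T
  tri : T →ₗ[ℝ] T →ₗ[ℝ] T →ₗ[ℝ] T
  mul_anticomm : ∀ x y : T, mul x y = - mul y x
  tri_skew : ∀ x y z : T, tri x y z = - tri y x z
  tri_cyclic : ∀ x y z : T, tri x y z + tri y z x + tri z x y = 0
  tri_leibniz : ∀ u v x y z : T,
    tri u v (tri x y z) = tri (tri u v x) y z + tri x (tri u v y) z + tri x y (tri u v z)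
  bol : ∀ u v x y : T, tri u v (mul x y) =
    mul (tri u v x) y + mul x (tri u v y) + tri x y (mul u v) - mul (mul x y) (mul u v)

variable {T : Type*} [AddCommGroup T] [Module ℝ T]

/-- The binary operation (x+f) *_ν (y+g) = x*y + ν(x,y) + f∘l(y) - g∘l(x) on T ⊕ T*,
where l(y)(z) = y*z. -/
def mulNu (A : LeftBolAlgebra T) (ν : T →ₗ[ℝ] T →ₗ[ℝ] Module.Dual ℝ T)
    (p q : T × Module.Dual ℝ T) : T × Module.Dual ℝ T :=
  (A.mul p.1 q.1, ν p.1 q.1 + p.2 ∘ₗ A.mul q.1 - q.2 ∘ₗ A.mul p.1)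

/-- The form b̃ on T ⊕ T* given by b̃(x+f, y+g) = f(y) + g(x). -/
def btilde (p q : T × Module.Dual ℝ T) : ℝ :=
  p.2 q.1 + q.2 p.1

/-- For a left Bol algebra T and a bilinear map ν : T × T → T*, the form b̃ satisfies
the associativity condition b̃((x+f)*_ν(y+g), z+h) = b̃(x+f, (y+g)*_ν(z+h)) for all
elements of T ⊕ T* if and only if ν(x,y)(z) = ν(y,z)(x) for all x,y,z ∈ T. -/
theorem btilde_assoc_iff_nu_cyclic
    (A : LeftBolAlgebra T) (ν : T →ₗ[ℝ] T →ₗ[ℝ] Module.Dual ℝ T) :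
    (∀ p q r : T × Module.Dual ℝ T,
        btilde (mulNu A ν p q) r = btilde p (mulNu A ν q r)) ↔
      (∀ x y z : T, ν x y z = ν y z x) := by
  constructor
  · intro h x y z
    have := h (x, 0) (y, 0) (z, 0)
    simpa [btilde, mulNu] using this
  · intro h p q r
    obtain ⟨x, f⟩ := p
    obtain ⟨y, g⟩ := q
    obtain ⟨z, k⟩ := r
    simp only [btilde, mulNu, LinearMap.add_apply, LinearMap.sub_apply,
      LinearMap.comp_apply]
    have h1 : A.mul z x = - A.mul x z := A.mul_anticomm z x
    have h2 : A.mul y x = - A.mul x y := A.mul_anticomm y x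
    rw [h x y z, h1, h2]
    simp only [map_neg]
    ring
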